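/- Let D be a division ring with center F = Z(D), let n be a positive integer, and let a ∈ D. Then the following are equivalent: (1) a is algebraic over F of degree at most n, i.e. there exists a nonzero polynomial p with coefficients in F of degree at most n such that p(a) = 0; (2) g_n(a, r_1, r_2, …, r_n) = 0 for all r_1, r_2, …, r_n ∈ D. -/

import Mathlib

/-- The generalized polynomial
`g_n(x, y₁, …, yₙ) = ∑_{δ ∈ S_{n+1}} sign(δ) · x^{δ(0)} y₁ x^{δ(1)} ⋯ yₙ x^{δ(n)}`
evaluated at `x = a`, `yᵢ = r i` in a division ring. -/
def gExpr {D : Type*} [DivisionRing D] (n : ℕ) (a : D) (r : Fin n → D) : D :=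
  ∑ δ : Equiv.Perm (Fin (n + 1)),
    ((Equiv.Perm.sign δ : ℤ) : D) *
      (a ^ ((δ 0 : Fin (n + 1)) : ℕ) *
        ((List.finRange n).map fun i => r i * a ^ ((δ i.succ : Fin (n + 1)) : ℕ)).prod)

namespace GnAux

variable {D : Type*} [DivisionRing D]

/-- Capelli-type expression for an arbitrary tuple `b`. -/
def capelli {m : ℕ} (b : Fin (m + 1) → D) (r : Fin m → D) : D :=
  ∑ δ : Equiv.Perm (Fin (m + 1)),
    ((Equiv.Perm.sign δ : ℤ) : D) *
      (b (δ 0) * ((List.finRange m).map fun i => r i * b (δ i.succ)).prod)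

/-- Variant where every `b`-factor is preceded by an `r`-factor. -/
def capelli' {m : ℕ} (b : Fin m → D) (r : Fin m → D) : D :=
  ∑ e : Equiv.Perm (Fin m),
    ((Equiv.Perm.sign e : ℤ) : D) *
      ((List.finRange m).map fun i => r i * b (e i)).prod

/-- `F`-linear independence, phrased with central coefficients. -/
def Indep {k : ℕ} (b : Fin k → D) : Prop :=
  ∀ c : Fin k → D, (∀ i, c i ∈ Subring.center D) → (∑ i, c i * b i) = 0 → c = 0

theorem int_cast_comm (z : ℤ) (x : D) : (z : D) * x = x * (z : D) :=
  Int.cast_commute z x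

theorem center_comm {z : D} (h : z ∈ Subring.center D) (x : D) : z * x = x * z :=
  (Subring.mem_center_iff.mp h x).symm

theorem center_left_mul {z : D} (h : z ∈ Subring.center D) (x y : D) :
    x * (z * y) = z * (x * y) := by
  rw [← mul_assoc, ← center_comm h x, mul_assoc]

theorem term_eq {m : ℕ} (b : Fin (m + 1) → D) (r : Fin m → D) (δ : Equiv.Perm (Fin (m + 1))) :
    b (δ 0) * ((List.finRange m).map fun i => r i * b (δ i.succ)).prod
      = ((List.finRange (m + 1)).map fun p => (Fin.cases 1 r p : D) * b (δ p)).prod := by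
  rw [List.finRange_succ, List.map_cons, List.prod_cons, List.map_map]
  simp [Function.comp_def]

theorem list_sandwich {k : ℕ} (f : Fin k → D) (q : Fin k) :
    ∀ L : List (Fin k), q ∈ L → L.Nodup →
      ∃ A B : D, ∀ v : D, ((L.map fun p => if p = q then v else f p).prod) = A * v * B := by
  intro L
  induction L with
  | nil => intro h; simp at h
  | cons p L ih =>
    intro hmem hnd
    rcases List.nodup_cons.mp hnd with ⟨hp, hnd'⟩
    by_cases hpq : p = q
    · subst hpq
      refine ⟨1, ((L.map fun x => f x)).prod, fun v => ?_⟩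
      rw [List.map_cons, List.prod_cons, if_pos rfl, one_mul]
      congr 2
      apply List.map_congr_left
      intro x hx
      rw [if_neg]
      rintro rfl; exact hp hx
    · have hq : q ∈ L := by
        rcases List.mem_cons.mp hmem with h | h
        · exact absurd h.symm hpq
        · exact h
      obtain ⟨A, B, hAB⟩ := ih hq hnd'
      refine ⟨f p * A, B, fun v => ?_⟩
      rw [List.map_cons, List.prod_cons, if_neg hpq, hAB]
      noncomm_ring

/-- Sandwich form of the `δ`-term with the `j`-slot of `b` replaced by `v`. -/
theorem term_sandwich {m : ℕ} (b : Fin (m + 1) → D) (r : Fin m → D) (j : Fin (m + 1))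
    (δ : Equiv.Perm (Fin (m + 1))) :
    ∃ A B : D, ∀ v : D,
      (Function.update b j v) (δ 0) *
        ((List.finRange m).map fun i => r i * (Function.update b j v) (δ i.succ)).prod
      = A * v * B := by
  set q : Fin (m + 1) := δ⁻¹ j with hq
  obtain ⟨A, B, hAB⟩ := list_sandwich (fun p => (Fin.cases 1 r p : D) * b (δ p)) q
    (List.finRange (m + 1)) (List.mem_finRange q) (List.nodup_finRange (m + 1))
  refine ⟨A * (Fin.cases 1 r q : D), B, fun v => ?_⟩
  rw [term_eq]
  have hmap : ((List.finRange (m + 1)).map fun p =>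
        (Fin.cases 1 r p : D) * (Function.update b j v) (δ p))
      = (List.finRange (m + 1)).map fun p =>
        if p = q then ((Fin.cases 1 r q : D) * v) else (Fin.cases 1 r p : D) * b (δ p) := by
    apply List.map_congr_left
    intro p _
    by_cases hpq : p = q
    · subst hpq
      rw [if_pos rfl, hq, Equiv.Perm.coe_inv, Equiv.apply_symm_apply, Function.update_self]
    · rw [if_neg hpq, Function.update_of_ne]
      intro h
      exact hpq (by rw [hq, ← h, Equiv.Perm.coe_inv, Equiv.symm_apply_apply])
  rw [hmap, hAB]
  simp [mul_assoc]

theorem capelli_eq_zero_of_eq {m : ℕ} (b : Fin (m + 1) → D) (r : Fin m → D)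
    {i j : Fin (m + 1)} (hij : i ≠ j) (hb : b i = b j) : capelli b r = 0 := by
  have hswap : ∀ x, b (Equiv.swap i j x) = b x := by
    intro x
    rcases eq_or_ne x i with rfl | hxi
    · rw [Equiv.swap_apply_left, hb]
    rcases eq_or_ne x j with rfl | hxj
    · rw [Equiv.swap_apply_right, hb]
    · rw [Equiv.swap_apply_of_ne_of_ne hxi hxj]
  unfold capelli
  apply Finset.sum_ninvolution (fun δ => Equiv.swap i j * δ)
  · intro δ
    have hsign : ((Equiv.Perm.sign (Equiv.swap i j * δ) : ℤ) : D)
        = -((Equiv.Perm.sign δ : ℤ) : D) := by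
      rw [map_mul, Equiv.Perm.sign_swap hij]
      push_cast
      rw [neg_one_mul]
    have hterm : ∀ x : Fin (m + 1), b ((Equiv.swap i j * δ) x) = b (δ x) := fun x => hswap (δ x)
    simp only [hsign, hterm, Equiv.Perm.mul_apply]
    simp only [hswap]
    rw [neg_mul, add_neg_cancel]
  · intro δ _ hδ
    exfalso
    apply hij
    have : (Equiv.swap i j * δ) (δ⁻¹ i) = δ (δ⁻¹ i) := by rw [hδ]
    simpa [Equiv.Perm.mul_apply] using this.symm
  · intro δ; exact Finset.mem_univ _
  · intro δ
    rw [← mul_assoc, Equiv.swap_mul_self, one_mul]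

theorem capelli_eq_zero_of_dep {m : ℕ} (b c : Fin (m + 1) → D)
    (hc : ∀ i, c i ∈ Subring.center D) {j : Fin (m + 1)} (hj : c j ≠ 0)
    (hsum : (∑ i, c i * b i) = 0) (r : Fin m → D) : capelli b r = 0 := by
  classical
  set d : Fin (m + 1) → D := fun i => -((c j)⁻¹ * c i) with hd
  have hdc : ∀ i, d i ∈ Subring.center D := fun i =>
    Subring.neg_mem _ (Subring.mul_mem _ (Set.inv_mem_center (hc j)) (hc i))
  have hbj : b j = ∑ i ∈ Finset.univ.erase j, d i * b i := by
    rw [← Finset.add_sum_erase Finset.univ (fun i => c i * b i) (Finset.mem_univ j)] at hsum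
    have h2 : c j * b j = -∑ i ∈ Finset.univ.erase j, c i * b i :=
      eq_neg_of_add_eq_zero_left hsum
    calc b j = (c j)⁻¹ * (c j * b j) := by rw [← mul_assoc, inv_mul_cancel₀ hj, one_mul]
      _ = ∑ i ∈ Finset.univ.erase j, -((c j)⁻¹ * (c i * b i)) := by
          rw [h2, mul_neg, Finset.mul_sum, Finset.sum_neg_distrib]
      _ = ∑ i ∈ Finset.univ.erase j, d i * b i := by
          apply Finset.sum_congr rfl
          intro i _
          simp [hd, mul_assoc]
  choose A B hAB using fun δ => term_sandwich b r j δ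
  have hterm : ∀ δ : Equiv.Perm (Fin (m + 1)),
      b (δ 0) * ((List.finRange m).map fun i => r i * b (δ i.succ)).prod
        = A δ * b j * B δ := by
    intro δ
    have h := hAB δ (b j)
    simpa only [Function.update_eq_self] using h
  have hcap : ∀ v : D,
      (∑ δ : Equiv.Perm (Fin (m + 1)), ((Equiv.Perm.sign δ : ℤ) : D) * (A δ * v * B δ))
        = capelli (Function.update b j v) r := by
    intro v
    unfold capelli
    exact Finset.sum_congr rfl fun δ _ => by rw [hAB δ v]
  have hstep : ∀ δ : Equiv.Perm (Fin (m + 1)),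
      ((Equiv.Perm.sign δ : ℤ) : D) * (A δ * b j * B δ)
        = ∑ i ∈ Finset.univ.erase j,
            d i * (((Equiv.Perm.sign δ : ℤ) : D) * (A δ * b i * B δ)) := by
    intro δ
    rw [hbj, Finset.mul_sum, Finset.sum_mul, Finset.mul_sum]
    apply Finset.sum_congr rfl
    intro i _
    rw [center_left_mul (hdc i), mul_assoc (d i), center_left_mul (hdc i)]
  calc capelli b r
      = ∑ δ : Equiv.Perm (Fin (m + 1)),
          ((Equiv.Perm.sign δ : ℤ) : D) * (A δ * b j * B δ) := by
        unfold capelli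
        exact Finset.sum_congr rfl fun δ _ => by rw [hterm δ]
    _ = ∑ δ : Equiv.Perm (Fin (m + 1)), ∑ i ∈ Finset.univ.erase j,
          d i * (((Equiv.Perm.sign δ : ℤ) : D) * (A δ * b i * B δ)) :=
        Finset.sum_congr rfl fun δ _ => hstep δ
    _ = ∑ i ∈ Finset.univ.erase j,
          d i * ∑ δ : Equiv.Perm (Fin (m + 1)),
            ((Equiv.Perm.sign δ : ℤ) : D) * (A δ * b i * B δ) := by
        rw [Finset.sum_comm]
        exact Finset.sum_congr rfl fun i _ => (Finset.mul_sum _ _ _).symm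
    _ = ∑ i ∈ Finset.univ.erase j, d i * capelli (Function.update b j (b i)) r :=
        Finset.sum_congr rfl fun i _ => by rw [hcap (b i)]
    _ = 0 := by
        apply Finset.sum_eq_zero
        intro i hi
        have hij : i ≠ j := Finset.ne_of_mem_erase hi
        rw [capelli_eq_zero_of_eq (Function.update b j (b i)) r hij
          (by rw [Function.update_of_ne hij, Function.update_self]), mul_zero]

/-- Artin–Whaples style lemma. -/
theorem aw_aux {k : ℕ} (b : Fin k → D) (hb : Indep b) (s : Finset (Fin k)) :
    ∀ w : Fin k → D, (∀ i ∉ s, w i = 0) →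
      (∀ y : D, (∑ i, b i * y * w i) = 0) → ∀ i, w i = 0 := by
  classical
  induction s using Finset.strongInduction with
  | _ s ih =>
    intro w hsupp hrel
    by_contra hcon
    push_neg at hcon
    obtain ⟨j, hj⟩ := hcon
    have hjs : j ∈ s := by
      by_contra hjs
      exact hj (hsupp j hjs)
    set w' : Fin k → D := fun i => w i * (w j)⁻¹ with hw'
    have hw'j : w' j = 1 := mul_inv_cancel₀ hj
    have hrel' : ∀ y : D, (∑ i, b i * y * w' i) = 0 := by
      intro y
      have : (∑ i, b i * y * w' i) = (∑ i, b i * y * w i) * (w j)⁻¹ := by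
        rw [Finset.sum_mul]
        exact Finset.sum_congr rfl fun i _ => by simp only [hw']; noncomm_ring
      rw [this, hrel y, zero_mul]
    have hsupp' : ∀ i ∉ s, w' i = 0 := by
      intro i hi
      simp [hw', hsupp i hi]
    have hcent : ∀ i, w' i ∈ Subring.center D := by
      intro i
      rw [Subring.mem_center_iff]
      intro z
      have hzrel : ∀ y : D, (∑ i, b i * y * (z * w' i - w' i * z)) = 0 := by
        intro y
        have h1 : (∑ i, b i * (y * z) * w' i) = 0 := hrel' (y * z)
        have h2 : (∑ i, b i * y * w' i) * z = 0 := by rw [hrel' y, zero_mul]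
        rw [Finset.sum_mul] at h2
        calc (∑ i, b i * y * (z * w' i - w' i * z))
            = ∑ i, (b i * (y * z) * w' i - b i * y * w' i * z) := by
              apply Finset.sum_congr rfl
              intro i _
              rw [mul_sub]
              congr 1 <;> noncomm_ring
          _ = (∑ i, b i * (y * z) * w' i) - ∑ i, b i * y * w' i * z := Finset.sum_sub_distrib ..
          _ = 0 := by rw [h1, h2, sub_zero]
      have hzero := ih (s.erase j) (Finset.erase_ssubset hjs)
        (fun i => z * w' i - w' i * z)
        (by
          intro i hi
          show z * w' i - w' i * z = 0
          rcases eq_or_ne i j with rfl | hij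
          · rw [hw'j, mul_one, one_mul, sub_self]
          · have : i ∉ s := fun h => hi (Finset.mem_erase.mpr ⟨hij, h⟩)
            rw [hsupp' i this, mul_zero, zero_mul, sub_self])
        hzrel i
      exact sub_eq_zero.mp hzero
    have := hb w' hcent (by
      have h1 := hrel' 1
      calc (∑ i, w' i * b i) = ∑ i, b i * 1 * w' i := by
            apply Finset.sum_congr rfl
            intro i _
            rw [mul_one, center_comm (hcent i)]
        _ = 0 := h1)
    have : w' j = 0 := by rw [this]; rfl
    rw [hw'j] at this
    exact one_ne_zero this

theorem aw {k : ℕ} (b : Fin k → D) (hb : Indep b) (w : Fin k → D)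
    (hrel : ∀ y : D, (∑ i, b i * y * w i) = 0) : ∀ i, w i = 0 :=
  aw_aux b hb Finset.univ w (fun i hi => absurd (Finset.mem_univ i) hi) hrel

theorem capelli_eq_sum {m : ℕ} (b : Fin (m + 1) → D) (r : Fin m → D) :
    capelli b r = ∑ k : Fin (m + 1),
      b k * (((if k = 0 then 1 else -1 : ℤ) : D) *
        capelli' (fun q : Fin m => b (Equiv.swap 0 k q.succ)) r) := by
  unfold capelli capelli'
  rw [← Equiv.sum_comp (Equiv.Perm.decomposeFin).symm
    (fun δ : Equiv.Perm (Fin (m + 1)) => ((Equiv.Perm.sign δ : ℤ) : D) *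
      (b (δ 0) * ((List.finRange m).map fun i => r i * b (δ i.succ)).prod)),
    Fintype.sum_prod_type]
  apply Finset.sum_congr rfl
  intro k _
  rw [Finset.mul_sum, Finset.mul_sum]
  apply Finset.sum_congr rfl
  intro e _
  rw [Equiv.Perm.decomposeFin.symm_sign, Equiv.Perm.decomposeFin_symm_apply_zero]
  have hsucc : ∀ i : Fin m,
      (Equiv.Perm.decomposeFin.symm (k, e)) i.succ = Equiv.swap 0 k (e i).succ :=
    fun i => Equiv.Perm.decomposeFin_symm_apply_succ e k i
  simp only [hsucc]
  rcases eq_or_ne k 0 with rfl | hk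
  · simp only [if_pos rfl]
    push_cast
    rw [one_mul, one_mul, ← mul_assoc, int_cast_comm, mul_assoc]
  · simp only [if_neg hk]
    push_cast
    rw [neg_one_mul, neg_one_mul, neg_mul, mul_neg]
    congr 1
    rw [← mul_assoc, int_cast_comm, mul_assoc]

theorem capelli'_cons {m : ℕ} (b : Fin (m + 1) → D) (y : D) (r : Fin m → D) :
    capelli' b (Fin.cons y r) = y * capelli b r := by
  unfold capelli' capelli
  rw [Finset.mul_sum]
  apply Finset.sum_congr rfl
  intro e _
  rw [List.finRange_succ, List.map_cons, List.prod_cons, List.map_map]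
  simp only [Function.comp_def, Fin.cons_succ, Fin.cons_zero]
  rw [← mul_assoc, ← mul_assoc, int_cast_comm _ y, mul_assoc, mul_assoc]

theorem capelli_zero (b : Fin 1 → D) (r : Fin 0 → D) : capelli b r = b 0 := by
  haveI : Subsingleton (Equiv.Perm (Fin 1)) :=
    ⟨fun a b => Equiv.ext fun x => Subsingleton.elim _ _⟩
  unfold capelli
  rw [Finset.sum_eq_single 1]
  · simp
  · intro δ _ hδ
    exact absurd (Subsingleton.elim δ 1) hδ
  · intro h
    exact absurd (Finset.mem_univ 1) h

theorem indep_tail {m : ℕ} (b : Fin (m + 2) → D) (hb : Indep b) :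
    Indep (fun i : Fin (m + 1) => b i.succ) := by
  intro c hc hsum
  set c' : Fin (m + 2) → D := Fin.cases 0 c with hc'
  have hc'c : ∀ i, c' i ∈ Subring.center D := by
    intro i
    induction i using Fin.cases with
    | zero => simpa [hc'] using Subring.zero_mem _
    | succ i => simpa [hc'] using hc i
  have hs : (∑ i, c' i * b i) = 0 := by
    rw [Fin.sum_univ_succ]
    simp only [hc', Fin.cases_zero, Fin.cases_succ, zero_mul, zero_add]
    exact hsum
  have h0 := hb c' hc'c hs
  funext i
  have := congrFun h0 i.succ
  simpa [hc'] using this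

theorem exists_capelli_ne_zero :
    ∀ (m : ℕ) (b : Fin (m + 1) → D), Indep b → ∃ r : Fin m → D, capelli b r ≠ 0 := by
  intro m
  induction m with
  | zero =>
    intro b hb
    refine ⟨fun i => i.elim0, ?_⟩
    rw [capelli_zero]
    intro h0
    have := hb (fun _ => 1) (fun _ => Subring.one_mem _) (by simpa using h0)
    have h1 : (1 : D) = 0 := congrFun this 0
    exact one_ne_zero h1
  | succ m ih =>
    intro b hb
    by_contra hcon
    push_neg at hcon
    have key : ∀ (r' : Fin m → D) (y : D),
        (∑ k : Fin (m + 2), b k * y *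
          (((if k = 0 then 1 else -1 : ℤ) : D) *
            capelli (fun q : Fin (m + 1) => b (Equiv.swap 0 k q.succ)) r')) = 0 := by
      intro r' y
      have h0 := hcon (Fin.cons y r')
      rw [capelli_eq_sum] at h0
      rw [← h0]
      apply Finset.sum_congr rfl
      intro k _
      rw [capelli'_cons]
      have h1 : ((if k = 0 then 1 else -1 : ℤ) : D) *
          (y * capelli (fun q : Fin (m + 1) => b (Equiv.swap 0 k q.succ)) r')
          = y * (((if k = 0 then 1 else -1 : ℤ) : D) *
            capelli (fun q : Fin (m + 1) => b (Equiv.swap 0 k q.succ)) r') := by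
        rw [← mul_assoc, int_cast_comm, mul_assoc]
      conv_rhs => rw [h1, ← mul_assoc]
    have hw : ∀ (r' : Fin m → D) (k : Fin (m + 2)),
        (((if k = 0 then 1 else -1 : ℤ) : D) *
          capelli (fun q : Fin (m + 1) => b (Equiv.swap 0 k q.succ)) r') = 0 := by
      intro r' k
      exact aw b hb _ (key r') k
    have hzero : ∀ r' : Fin m → D, capelli (fun i : Fin (m + 1) => b i.succ) r' = 0 := by
      intro r'
      have := hw r' 0
      simp only [Equiv.swap_self, Equiv.refl_apply, reduceIte, Int.cast_one, one_mul] at this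
      exact this
    obtain ⟨r', hr'⟩ := ih (fun i : Fin (m + 1) => b i.succ) (indep_tail b hb)
    exact hr' (hzero r')

end GnAux

/-- Let `D` be a division ring with center `F = Z(D)`, `n` a positive integer, `a ∈ D`.
Then `a` is algebraic over `F` of degree at most `n` iff `g_n(a, r₁, …, rₙ) = 0`
for all `r₁, …, rₙ ∈ D`. -/
theorem algebraic_degree_le_iff_gExpr_eq_zero
    (D : Type*) [DivisionRing D] (n : ℕ) (hn : 0 < n) (a : D) :
    (∃ p : Polynomial D, p ≠ 0 ∧ p.natDegree ≤ n ∧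
        (∀ i, p.coeff i ∈ Subring.center D) ∧ Polynomial.eval a p = 0) ↔
      ∀ r : Fin n → D, gExpr n a r = 0 := by
  classical
  have hgc : ∀ r : Fin n → D,
      gExpr n a r = GnAux.capelli (fun i : Fin (n + 1) => a ^ (i : ℕ)) r := fun r => rfl
  constructor
  · rintro ⟨p, hp0, hdeg, hcent, heval⟩ r
    rw [hgc]
    have hdlt : p.natDegree < n + 1 := Nat.lt_succ_of_le hdeg
    set c : Fin (n + 1) → D := fun i => p.coeff i with hc
    have hj : c ⟨p.natDegree, hdlt⟩ ≠ 0 := fun h =>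
      hp0 (Polynomial.leadingCoeff_eq_zero.mp h)
    have hsum : (∑ i : Fin (n + 1), c i * a ^ (i : ℕ)) = 0 := by
      rw [Fin.sum_univ_eq_sum_range (fun i => p.coeff i * a ^ i) (n + 1),
        ← Polynomial.eval_eq_sum_range' hdlt]
      exact heval
    exact GnAux.capelli_eq_zero_of_dep _ c (fun i => hcent i) hj hsum r
  · intro h
    by_cases hind : GnAux.Indep (fun i : Fin (n + 1) => a ^ (i : ℕ))
    · exfalso
      obtain ⟨r, hr⟩ := GnAux.exists_capelli_ne_zero n _ hind
      exact hr (by rw [← hgc r]; exact h r)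
    · unfold GnAux.Indep at hind
      push_neg at hind
      obtain ⟨c, hcent, hsum, hcne⟩ := hind
      set cc : ℕ → D := fun i => if h : i < n + 1 then c ⟨i, h⟩ else 0 with hcc
      set p : Polynomial D := ∑ i ∈ Finset.range (n + 1), Polynomial.monomial i (cc i) with hp
      have hcoeff : ∀ k : ℕ, p.coeff k = if k ∈ Finset.range (n + 1) then cc k else 0 := by
        intro k
        rw [hp, Polynomial.finset_sum_coeff]
        rw [← Finset.sum_ite_eq' (Finset.range (n + 1)) k cc]
        apply Finset.sum_congr rfl
        intro i _
        rw [Polynomial.coeff_monomial]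
      obtain ⟨j, hj⟩ := Function.ne_iff.mp hcne
      have hcceq : ∀ i : Fin (n + 1), cc (i : ℕ) = c i := by
        intro i
        simp only [hcc]
        rw [dif_pos i.isLt]
      refine ⟨p, ?_, ?_, ?_, ?_⟩
      · intro hpz
        apply hj
        have h2 := hcoeff (j : ℕ)
        rw [hpz, Polynomial.coeff_zero] at h2
        have hjm : (j : ℕ) ∈ Finset.range (n + 1) := Finset.mem_range.mpr j.isLt
        rw [if_pos hjm, hcceq j] at h2
        exact h2.symm
      · apply Polynomial.natDegree_sum_le_of_forall_le
        intro i hi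
        exact le_trans (Polynomial.natDegree_monomial_le _) (Nat.lt_succ_iff.mp
          (Finset.mem_range.mp hi))
      · intro i
        rw [hcoeff i]
        split_ifs with hi
        · simp only [hcc]
          split_ifs with hi'
          · exact hcent _
          · exact Subring.zero_mem _
        · exact Subring.zero_mem _
      · rw [hp, Polynomial.eval_finset_sum]
        simp only [Polynomial.eval_monomial]
        rw [← Fin.sum_univ_eq_sum_range (fun i => cc i * a ^ i) (n + 1)]
        rw [← hsum]
        apply Finset.sum_congr rfl
        intro i _
        rw [hcceq i]
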